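/- Let G be a group covered by finitely many left cosets g₁H₁, ..., gₙHₙ of (possibly distinct) subgroups H₁, ..., Hₙ. Then at least one of the subgroups Hᵢ has finite index in G. -/
import Mathlib

open scoped Pointwise
/-- B. H. Neumann's Lemma: if a group is covered by finitely many left cosets of
subgroups, then one of the subgroups has finite index. -/
theorem bh_neumann {G : Type*} [Group G] (n : ℕ) (g : Fin n → G) (H : Fin n → Subgroup G)
    (hcover : ∀ x : G, ∃ i : Fin n, x ∈ (fun h => g i * h) '' (H i : Set G)) :
    ∃ i : Fin n, (H i).FiniteIndex := by
  have hcovers : ⋃ i ∈ (Finset.univ : Finset (Fin n)), (g i) • (H i : Set G) = Set.univ := by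
    ext x
    simp only [Set.mem_iUnion, Set.mem_univ, iff_true, Finset.mem_univ, exists_true_left]
    obtain ⟨i, hi⟩ := hcover x
    exact ⟨i, hi⟩
  obtain ⟨k, _, hk⟩ := Subgroup.exists_finiteIndex_of_leftCoset_cover hcovers
  exact ⟨k, hk⟩
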